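/- (Lemma A.2, case A = ∅.) Let M ≥ 1, let J_1,…,J_M > 0, let k₁, k₂ ≥ 1 be integers with k₁ + k₂ ≤ M, and let K > 0. Let J_{(1)} ≤ ⋯ ≤ J_{(M)} be the increasing rearrangement of J_1,…,J_M, and let 𝐉_{k₁−1} := (J_{(k₁)}, J_{(k₁+1)}, …, J_{(M)}) be the increasing list of the M − k₁ + 1 largest values. Then for every B ⊆ {1,…,M} with |B| < k₁ and every c ∈ [0,1]^M with ∑_{i=1}^M c_i ≤ K: min over G ⊆ {1,…,M} with |G ∖ B| ≥ k₂ of ∑_{j ∈ G} c_j J_j ≤ V(k₂, K, 𝐉_{k₁−1}). -/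

import Mathlib

open Finset

/-- The inner minimum `𝒱(c; κ, L)`: the minimum over subsets `U ⊆ {1,…,N}` with `|U| = κ`
of `∑_{i ∈ U} c_i L_i`. -/
noncomputable def Vmin (N κ : ℕ) (L c : ℕ → ℝ) : ℝ :=
  sInf {x : ℝ | ∃ U : Finset ℕ, U ⊆ Finset.Icc 1 N ∧ U.card = κ ∧ x = ∑ i ∈ U, c i * L i}

/-- Membership in the constraint set `D_N(K) = {c ∈ [0,1]^N : ∑_{i=1}^N c_i ≤ K}`. -/
def Dmem (N : ℕ) (K : ℝ) (c : ℕ → ℝ) : Prop :=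
  (∀ i ∈ Finset.Icc 1 N, 0 ≤ c i ∧ c i ≤ 1) ∧ (∑ i ∈ Finset.Icc 1 N, c i) ≤ K

/-- The max–min value `V(κ, K, L) = sup_{c ∈ D_N(K)} 𝒱(c; κ, L)`. -/
noncomputable def Vval (N κ : ℕ) (K : ℝ) (L : ℕ → ℝ) : ℝ :=
  sSup {v : ℝ | ∃ c : ℕ → ℝ, Dmem N K c ∧ v = Vmin N κ L c}

/-- Lemma A.2, case `A = ∅`: with `Js` the increasing rearrangement of
`J_1,…,J_M` and `𝐉_{k₁−1} = (J_{(k₁)},…,J_{(M)})`, for every `B ⊆ {1,…,M}` with `|B| < k₁`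
and every `c ∈ [0,1]^M` with `∑ c_i ≤ K`,
`min_{G : |G ∖ B| ≥ k₂} ∑_{j ∈ G} c_j J_j ≤ V(k₂, K, 𝐉_{k₁−1})`. -/
theorem stmt_10 (M : ℕ) (hM : 1 ≤ M) (J : ℕ → ℝ)
    (hJ : ∀ j ∈ Finset.Icc 1 M, 0 < J j)
    (k₁ k₂ : ℕ) (hk₁ : 1 ≤ k₁) (hk₂ : 1 ≤ k₂) (hkM : k₁ + k₂ ≤ M)
    (K : ℝ) (hK : 0 < K)
    (Js : ℕ → ℝ)
    (hJsmono : ∀ i j : ℕ, 1 ≤ i → i ≤ j → j ≤ M → Js i ≤ Js j)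
    (hJsperm : (Finset.Icc 1 M).val.map Js = (Finset.Icc 1 M).val.map J)
    (B : Finset ℕ) (hB : B ⊆ Finset.Icc 1 M) (hBcard : B.card < k₁)
    (c : ℕ → ℝ) (hc : ∀ i ∈ Finset.Icc 1 M, 0 ≤ c i ∧ c i ≤ 1)
    (hcK : ∑ i ∈ Finset.Icc 1 M, c i ≤ K) :
    sInf {x : ℝ | ∃ G : Finset ℕ, G ⊆ Finset.Icc 1 M ∧ k₂ ≤ (G \ B).card ∧
        x = ∑ j ∈ G, c j * J j}
      ≤ Vval (M - k₁ + 1) k₂ K (fun i => Js (i + (k₁ - 1))) := by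
  classical
  set N := M - k₁ + 1 with hN
  have hk₁M : k₁ ≤ M := by omega
  have hk₂N : k₂ ≤ N := by omega
  set L : ℕ → ℝ := fun i => Js (i + (k₁ - 1)) with hL
  -- positivity of Js on Icc 1 M
  have hJs_pos : ∀ j ∈ Finset.Icc 1 M, 0 < Js j := by
    intro j hj
    have h1 : Js j ∈ (Finset.Icc 1 M).val.map Js := Multiset.mem_map_of_mem _ hj
    rw [hJsperm] at h1
    obtain ⟨t, ht, hts⟩ := Multiset.mem_map.1 h1
    rw [← hts]; exact hJ t ht
  have hLpos : ∀ i ∈ Finset.Icc 1 N, 0 < L i := by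
    intro i hi
    simp only [Finset.mem_Icc] at hi
    exact hJs_pos _ (Finset.mem_Icc.2 (by omega))
  -- the complement of B
  set Sc := (Finset.Icc 1 M) \ B with hSc
  have hScM : Sc ⊆ Finset.Icc 1 M := Finset.sdiff_subset
  have hScCard : N ≤ Sc.card := by
    rw [hSc, Finset.card_sdiff_of_subset hB, Nat.card_Icc]; omega
  -- sorted list of Sc by J-values
  set le : ℕ → ℕ → Bool := fun a b => decide (J a ≤ J b) with hle
  set l : List ℕ := Sc.toList.mergeSort le with hl
  have hlperm : List.Perm l Sc.toList := List.mergeSort_perm _ _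
  have hlnodup : l.Nodup := hlperm.nodup_iff.2 (Finset.nodup_toList _)
  have hllen : N ≤ l.length := by
    rw [hl, List.length_mergeSort, Finset.length_toList]; exact hScCard
  have hlmem : ∀ a, a ∈ l ↔ a ∈ Sc := by
    intro a; rw [hl, List.mem_mergeSort, Finset.mem_toList]
  have hlsorted : ∀ (i j : ℕ) (hi : i < l.length) (hj : j < l.length), i < j →
      J l[i] ≤ J l[j] := by
    have h := List.pairwise_mergeSort (le := le)
      (fun a b c hab hbc => by
        simp only [hle, decide_eq_true_eq] at *; exact le_trans hab hbc)
      (fun a b => by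
        simp only [hle, Bool.or_eq_true, decide_eq_true_eq]; exact le_total _ _)
      Sc.toList
    rw [List.pairwise_iff_getElem] at h
    intro i j hi hj hij
    have := h i j (by simpa [hl] using hi) (by simpa [hl] using hj) hij
    simpa [hle, ← hl] using this
  -- the selection function
  set s : ℕ → ℕ := fun i => l.getD (i - 1) 0 with hs
  have hsval : ∀ i ∈ Finset.Icc 1 N, ∀ (h : i - 1 < l.length), s i = l[i-1] := by
    intro i hi h
    simp only [hs, List.getD_eq_getElem?_getD, List.getElem?_eq_getElem h, Option.getD_some]
  have hsmem : ∀ i ∈ Finset.Icc 1 N, s i ∈ Sc := by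
    intro i hi
    have hi' := Finset.mem_Icc.1 hi
    have h1 : i - 1 < l.length := by omega
    rw [hsval i hi h1]
    exact (hlmem _).1 (List.getElem_mem h1)
  have hsinj : Set.InjOn s (Finset.Icc 1 N : Set ℕ) := by
    intro a ha b hb hab
    simp only [Finset.coe_Icc, Set.mem_Icc] at ha hb
    have h1 : a - 1 < l.length := by omega
    have h2 : b - 1 < l.length := by omega
    rw [hsval a (Finset.mem_Icc.2 ha) h1, hsval b (Finset.mem_Icc.2 hb) h2] at hab
    have := (List.Nodup.getElem_inj_iff hlnodup).1 hab
    omega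
  -- the key domination bound
  have key : ∀ i ∈ Finset.Icc 1 N, J (s i) ≤ L i := by
    intro i hi
    have hi' := Finset.mem_Icc.1 hi
    by_contra hcon
    push_neg at hcon
    set v := J (s i) with hv
    set t := i + (k₁ - 1) with ht
    have htM : t ≤ M := by omega
    -- Step 1: at least t indices j ∈ Icc 1 M have Js j < v
    have h1 : t ≤ ((Finset.Icc 1 M).filter (fun j => Js j < v)).card := by
      have hsub : Finset.Icc 1 t ⊆ (Finset.Icc 1 M).filter (fun j => Js j < v) := by
        intro u hu
        have hu' := Finset.mem_Icc.1 hu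
        refine Finset.mem_filter.2 ⟨Finset.mem_Icc.2 ⟨hu'.1, le_trans hu'.2 htM⟩, ?_⟩
        exact lt_of_le_of_lt (hJsmono u t hu'.1 hu'.2 htM) hcon
      calc t = (Finset.Icc 1 t).card := by rw [Nat.card_Icc]; omega
        _ ≤ _ := Finset.card_le_card hsub
    -- Step 2: transfer the count from Js to J via the permutation
    have h2 : ((Finset.Icc 1 M).filter (fun j => Js j < v)).card
        = ((Finset.Icc 1 M).filter (fun j => J j < v)).card := by
      have e1 : ((Finset.Icc 1 M).filter (fun j => Js j < v)).card
          = Multiset.countP (fun x => x < v) ((Finset.Icc 1 M).val.map Js) := by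
        rw [Multiset.countP_map]; rfl
      have e2 : ((Finset.Icc 1 M).filter (fun j => J j < v)).card
          = Multiset.countP (fun x => x < v) ((Finset.Icc 1 M).val.map J) := by
        rw [Multiset.countP_map]; rfl
      rw [e1, e2, hJsperm]
    -- Step 3: every such j lies in B or among the first i-1 entries of l
    have h3 : (Finset.Icc 1 M).filter (fun j => J j < v)
        ⊆ B ∪ (l.take (i - 1)).toFinset := by
      intro j hj
      obtain ⟨hjM, hjv⟩ := Finset.mem_filter.1 hj
      by_cases hjB : j ∈ B
      · exact Finset.mem_union_left _ hjB
      · have hjSc : j ∈ Sc := Finset.mem_sdiff.2 ⟨hjM, hjB⟩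
        obtain ⟨p, hp, hpj⟩ := List.getElem_of_mem ((hlmem j).2 hjSc)
        have hi1 : i - 1 < l.length := by omega
        have hvp : v = J l[i-1] := by rw [hv, hsval i hi hi1]
        have hplt : p < i - 1 := by
          by_contra hple
          push_neg at hple
          rcases eq_or_lt_of_le hple with heq | hlt
          · subst heq
            rw [hpj] at hvp; exact absurd hvp.symm (ne_of_lt hjv)
          · have := hlsorted (i-1) p hi1 hp hlt
            rw [← hvp, hpj] at this
            exact absurd hjv (not_lt.2 this)
        refine Finset.mem_union_right _ ?_
        rw [List.mem_toFinset, ← hpj, List.getElem_take' hp hplt]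
        exact List.getElem_mem _
    have h4 : ((Finset.Icc 1 M).filter (fun j => J j < v)).card ≤ B.card + (i - 1) := by
      calc ((Finset.Icc 1 M).filter (fun j => J j < v)).card
          ≤ (B ∪ (l.take (i - 1)).toFinset).card := Finset.card_le_card h3
        _ ≤ B.card + (l.take (i - 1)).toFinset.card := Finset.card_union_le _ _
        _ ≤ B.card + (l.take (i - 1)).length :=
            Nat.add_le_add_left (List.toFinset_card_le _) _
        _ ≤ B.card + (i - 1) := by
            exact Nat.add_le_add_left (by rw [List.length_take]; omega) _
    omega
  -- the comparison vector c'
  set c' : ℕ → ℝ := fun i => c (s i) with hc'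
  have hc'mem : Dmem N K c' := by
    constructor
    · intro i hi
      exact hc _ (hScM (hsmem i hi))
    · calc ∑ i ∈ Finset.Icc 1 N, c' i
          = ∑ j ∈ (Finset.Icc 1 N).image s, c j := by
            rw [Finset.sum_image (fun a ha b hb hab => hsinj (by simpa using ha)
              (by simpa using hb) hab)]
        _ ≤ ∑ i ∈ Finset.Icc 1 M, c i := by
            apply Finset.sum_le_sum_of_subset_of_nonneg
            · intro j hj
              obtain ⟨a, ha, rfl⟩ := Finset.mem_image.1 hj
              exact hScM (hsmem a ha)
            · intro j hj _
              exact (hc j hj).1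
        _ ≤ K := hcK
  -- the LHS set is bounded below by 0 and the Vmin set of c' is nonempty
  have hLHSbdd : BddBelow {x : ℝ | ∃ G : Finset ℕ, G ⊆ Finset.Icc 1 M ∧ k₂ ≤ (G \ B).card ∧
      x = ∑ j ∈ G, c j * J j} := by
    refine ⟨0, fun x hx => ?_⟩
    obtain ⟨G, hG, _, rfl⟩ := hx
    exact Finset.sum_nonneg fun j hj =>
      mul_nonneg (hc j (hG hj)).1 (le_of_lt (hJ j (hG hj)))
  -- Claim 1 : sInf LHS ≤ Vmin N k₂ L c'
  have claim1 : sInf {x : ℝ | ∃ G : Finset ℕ, G ⊆ Finset.Icc 1 M ∧ k₂ ≤ (G \ B).card ∧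
      x = ∑ j ∈ G, c j * J j} ≤ Vmin N k₂ L c' := by
    rw [Vmin]
    apply le_csInf
    · exact ⟨_, ⟨Finset.Icc 1 k₂, Finset.Icc_subset_Icc_right hk₂N, by rw [Nat.card_Icc]; omega, rfl⟩⟩
    · rintro x ⟨U, hUN, hUcard, rfl⟩
      set G := U.image s with hG
      have hGB : ∀ j ∈ G, j ∉ B := by
        intro j hj
        obtain ⟨a, ha, rfl⟩ := Finset.mem_image.1 hj
        exact (Finset.mem_sdiff.1 (hsmem a (hUN ha))).2
      have hGM : G ⊆ Finset.Icc 1 M := by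
        intro j hj
        obtain ⟨a, ha, rfl⟩ := Finset.mem_image.1 hj
        exact hScM (hsmem a (hUN ha))
      have hGcard : (G \ B).card = k₂ := by
        rw [Finset.sdiff_eq_self_of_disjoint (Finset.disjoint_left.2 hGB)]
        rw [hG, Finset.card_image_of_injOn
          (fun a ha b hb hab => hsinj (by simpa using hUN ha) (by simpa using hUN hb) hab),
          hUcard]
      have hy : (∑ j ∈ G, c j * J j) ∈ {x : ℝ | ∃ G : Finset ℕ, G ⊆ Finset.Icc 1 M ∧
          k₂ ≤ (G \ B).card ∧ x = ∑ j ∈ G, c j * J j} :=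
        ⟨G, hGM, le_of_eq hGcard.symm, rfl⟩
      refine le_trans (csInf_le hLHSbdd hy) ?_
      rw [hG, Finset.sum_image
        (fun a ha b hb hab => hsinj (by simpa using hUN ha) (by simpa using hUN hb) hab)]
      apply Finset.sum_le_sum
      intro i hi
      have hiN := hUN hi
      exact mul_le_mul_of_nonneg_left (key i hiN) (hc _ (hScM (hsmem i hiN))).1
  -- Claim 2 : Vmin N k₂ L c' ≤ Vval N k₂ K L
  have claim2 : Vmin N k₂ L c' ≤ Vval N k₂ K L := by
    rw [Vval]
    apply le_csSup
    · -- bounded above by ∑_{i ∈ Icc 1 k₂} L i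
      refine ⟨∑ i ∈ Finset.Icc 1 k₂, L i, ?_⟩
      rintro v ⟨c'', hc'', rfl⟩
      rw [Vmin]
      have hU₀ : Finset.Icc 1 k₂ ⊆ Finset.Icc 1 N := Finset.Icc_subset_Icc_right hk₂N
      have hbdd : BddBelow {x : ℝ | ∃ U : Finset ℕ, U ⊆ Finset.Icc 1 N ∧ U.card = k₂ ∧
          x = ∑ i ∈ U, c'' i * L i} := by
        refine ⟨0, fun x hx => ?_⟩
        obtain ⟨U, hU, _, rfl⟩ := hx
        exact Finset.sum_nonneg fun i hi =>
          mul_nonneg (hc''.1 i (hU hi)).1 (le_of_lt (hLpos i (hU hi)))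
      refine le_trans (csInf_le hbdd ⟨Finset.Icc 1 k₂, hU₀, by rw [Nat.card_Icc]; omega, rfl⟩) ?_
      apply Finset.sum_le_sum
      intro i hi
      nth_rewrite 2 [show L i = 1 * L i by ring]
      exact mul_le_mul_of_nonneg_right (hc''.1 i (hU₀ hi)).2 (le_of_lt (hLpos i (hU₀ hi)))
    · exact ⟨c', hc'mem, rfl⟩
  exact le_trans claim1 claim2
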